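/- Let G = (X,Y,A,B,V) be a two-player free game, let ε ∈ (0,1), and let κ := ⌈ln(6|Y||B|)/ε²⌉; assume κ ≤ |X|. Then with probability at least 2/3 over a uniformly random κ-element subset S ⊆ X, there exists a function α : S → A such that for every function b_α : Y → B satisfying b_α(y) ∈ argmax_{b∈B} E_{x∈S}[V(x,y,α(x),b)] for each y ∈ Y, it holds that ω(G) − 2ε ≤ max_{a : X → A} E_{x∈X, y∈Y}[V(x,y,a(x),b_α(y))] ≤ ω(G), where x and y are independent and uniform. -/

import Mathlib

open Finset
open scoped Classical

/-- The value `ω(G)` of the two-player free game `G = (X,Y,A,B,V)`: the maximum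
over deterministic strategies `a : X → A`, `b : Y → B` of the expected
verification value for independent uniform questions. -/
noncomputable def gameVal {X Y A B : Type} [Fintype X] [Fintype Y]
    (V : X → Y → A → B → ℝ) : ℝ :=
  ⨆ a : X → A, ⨆ b : Y → B,
    (∑ x : X, ∑ y : Y, V x y (a x) (b y)) /
      ((Fintype.card X : ℝ) * (Fintype.card Y : ℝ))

/-- The value `ω(G_S)` of the subgame in which Merlin₁'s question is uniform over
`S ⊆ X` instead of `X`. -/
noncomputable def subGameVal {X Y A B : Type} [Fintype X] [Fintype Y]
    (V : X → Y → A → B → ℝ) (S : Finset X) : ℝ :=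
  ⨆ a : X → A, ⨆ b : Y → B,
    (∑ x ∈ S, ∑ y : Y, V x y (a x) (b y)) /
      ((S.card : ℝ) * (Fintype.card Y : ℝ))

/-- The value of Merlin₁'s best response to a fixed strategy `bα : Y → B` of
Merlin₂ in the full game. -/
noncomputable def bestRespVal {X Y A B : Type} [Fintype X] [Fintype Y]
    (V : X → Y → A → B → ℝ) (bα : Y → B) : ℝ :=
  ⨆ a : X → A,
    (∑ x : X, ∑ y : Y, V x y (a x) (bα y)) /
      ((Fintype.card X : ℝ) * (Fintype.card Y : ℝ))

set_option maxHeartbeats 1000000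

section Aux


noncomputable def esum {α : Type*} (u : α → ℝ) (k : ℕ) (F : Finset α) : ℝ :=
  ∑ S ∈ F.powersetCard k, ∏ x ∈ S, u x

lemma esum_zero {α : Type*} (u : α → ℝ) (F : Finset α) : esum u 0 F = 1 := by
  simp [esum, Finset.powersetCard_zero]

lemma esum_nonneg {α : Type*} {u : α → ℝ} {F : Finset α} (hu : ∀ x ∈ F, 0 ≤ u x) (k : ℕ) :
    0 ≤ esum u k F := by
  refine Finset.sum_nonneg fun S hS => Finset.prod_nonneg fun x hx => ?_
  exact hu x ((Finset.mem_powersetCard.1 hS).1 hx)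

lemma esum_erase {α : Type*} (u : α → ℝ) (k : ℕ) {F : Finset α} {x : α} (hx : x ∈ F) :
    esum u (k+1) F = esum u (k+1) (F.erase x) + u x * esum u k (F.erase x) := by
  classical
  conv_lhs => rw [esum, ← Finset.insert_erase hx,
    Finset.powersetCard_succ_insert (Finset.notMem_erase x F) k]
  rw [Finset.sum_union]
  · congr 1
    rw [Finset.sum_image]
    · rw [esum, Finset.mul_sum]
      refine Finset.sum_congr rfl fun S hS => ?_
      rw [Finset.prod_insert fun h => Finset.notMem_erase x F ((Finset.mem_powersetCard.1 hS).1 h)]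
    · intro S hS T hT hST
      have hxS : x ∉ S := fun h => Finset.notMem_erase x F ((Finset.mem_powersetCard.1 hS).1 h)
      have hxT : x ∉ T := fun h => Finset.notMem_erase x F ((Finset.mem_powersetCard.1 hT).1 h)
      have := congrArg (fun W => Finset.erase W x) hST
      simpa [Finset.erase_insert hxS, Finset.erase_insert hxT] using this
  · rw [Finset.disjoint_right]
    intro S hS hS'
    obtain ⟨T, hT, rfl⟩ := Finset.mem_image.1 hS
    exact Finset.notMem_erase x F ((Finset.mem_powersetCard.1 hS').1 (Finset.mem_insert_self x T))

lemma esum_deriv {α : Type*} (u : α → ℝ) (k : ℕ) (F : Finset α) :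
    ∑ x ∈ F, u x * esum u k (F.erase x) = (k+1 : ℝ) * esum u (k+1) F := by
  classical
  have lhs_eq : ∑ x ∈ F, u x * esum u k (F.erase x)
      = ∑ p ∈ F.sigma (fun x => (F.erase x).powersetCard k), u p.1 * ∏ y ∈ p.2, u y := by
    rw [Finset.sum_sigma]
    exact Finset.sum_congr rfl fun x _ => by rw [esum, Finset.mul_sum]
  have rhs_eq : (k+1 : ℝ) * esum u (k+1) F
      = ∑ q ∈ (F.powersetCard (k+1)).sigma (fun T => T), ∏ y ∈ q.1, u y := by
    rw [Finset.sum_sigma, esum, Finset.mul_sum]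
    refine Finset.sum_congr rfl fun T hT => ?_
    show (k+1 : ℝ) * ∏ x ∈ T, u x = ∑ _s ∈ T, ∏ y ∈ T, u y
    rw [Finset.sum_const, nsmul_eq_mul, (Finset.mem_powersetCard.1 hT).2]
    push_cast
    ring
  rw [lhs_eq, rhs_eq]
  refine Finset.sum_nbij' (fun p => ⟨insert p.1 p.2, p.1⟩) (fun q => ⟨q.2, q.1.erase q.2⟩)
    ?_ ?_ ?_ ?_ ?_
  · rintro ⟨x, S⟩ hp
    obtain ⟨hx, hS⟩ := Finset.mem_sigma.1 hp
    obtain ⟨hSsub, hScard⟩ := Finset.mem_powersetCard.1 hS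
    have hxS : x ∉ S := fun h => Finset.notMem_erase x F (hSsub h)
    refine Finset.mem_sigma.2 ⟨Finset.mem_powersetCard.2 ⟨?_, ?_⟩, Finset.mem_insert_self x S⟩
    · intro y hy
      rcases Finset.mem_insert.1 hy with rfl | hy
      · exact hx
      · exact Finset.mem_of_mem_erase (hSsub hy)
    · rw [Finset.card_insert_of_notMem hxS, hScard]
  · rintro ⟨T, x⟩ hq
    obtain ⟨hT, hx⟩ := Finset.mem_sigma.1 hq
    obtain ⟨hTsub, hTcard⟩ := Finset.mem_powersetCard.1 hT
    refine Finset.mem_sigma.2 ⟨hTsub hx, Finset.mem_powersetCard.2 ⟨?_, ?_⟩⟩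
    · intro y hy
      exact Finset.mem_erase.2 ⟨(Finset.mem_erase.1 hy).1,
        hTsub (Finset.mem_of_mem_erase hy)⟩
    · rw [Finset.card_erase_of_mem hx, hTcard]
      omega
  · rintro ⟨x, S⟩ hp
    obtain ⟨hx, hS⟩ := Finset.mem_sigma.1 hp
    have hxS : x ∉ S := fun h => Finset.notMem_erase x F ((Finset.mem_powersetCard.1 hS).1 h)
    simp [Finset.erase_insert hxS]
  · rintro ⟨T, x⟩ hq
    obtain ⟨hT, hx⟩ := Finset.mem_sigma.1 hq
    simp [Finset.insert_erase hx]
  · rintro ⟨x, S⟩ hp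
    obtain ⟨hx, hS⟩ := Finset.mem_sigma.1 hp
    have hxS : x ∉ S := fun h => Finset.notMem_erase x F ((Finset.mem_powersetCard.1 hS).1 h)
    exact (Finset.prod_insert hxS).symm

lemma esum_pair {α : Type*} (u : α → ℝ) (k : ℕ) {F : Finset α} {x y : α}
    (hx : x ∈ F) (hy : y ∈ F) (hxy : x ≠ y) :
    u x * esum u k (F.erase x) - u y * esum u k (F.erase y)
      = (u x - u y) * esum u k ((F.erase x).erase y) := by
  cases k with
  | zero => simp [esum_zero]
  | succ m =>
      have hy' : y ∈ F.erase x := Finset.mem_erase.2 ⟨Ne.symm hxy, hy⟩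
      have hx' : x ∈ F.erase y := Finset.mem_erase.2 ⟨hxy, hx⟩
      rw [esum_erase u m hy', esum_erase u m hx', Finset.erase_right_comm (a := y) (b := x)]
      ring
lemma esum_one {α : Type*} (u : α → ℝ) (F : Finset α) : esum u 1 F = ∑ x ∈ F, u x := by
  have := esum_deriv u 0 F
  simp [esum_zero] at this
  linarith

lemma esum_ratio {α : Type*} {u : α → ℝ} {F : Finset α} (hu : ∀ x ∈ F, 0 ≤ u x) (k : ℕ) :
    (F.card : ℝ) * ((k+1 : ℝ) * esum u (k+1) F) + (k : ℝ) * ((∑ x ∈ F, u x) * esum u k F)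
      ≤ (F.card : ℝ) * ((∑ x ∈ F, u x) * esum u k F) := by
  classical
  cases k with
  | zero => simp [esum_zero, esum_one]
  | succ m =>
      set n : ℝ := (F.card : ℝ)
      set σ : ℝ := ∑ x ∈ F, u x
      set g : α → ℝ := fun x => u x * esum u m (F.erase x) with hg
      -- monovary
      have hmono : MonovaryOn u g (F : Set α) := by
        intro i hi j hj hgij
        by_contra hui
        push_neg at hui
        have hne : i ≠ j := by rintro rfl; exact lt_irrefl _ hgij
        have hpair := esum_pair u m (Finset.mem_coe.1 hi) (Finset.mem_coe.1 hj) hne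
        have hE : 0 ≤ esum u m ((F.erase i).erase j) := by
          refine esum_nonneg (fun z hz => hu z ?_) m
          exact Finset.mem_of_mem_erase (Finset.mem_of_mem_erase hz)
        have hgji : g j ≤ g i := by
          have h1 : 0 ≤ (u i - u j) * esum u m ((F.erase i).erase j) := by nlinarith
          simp only [hg]
          linarith [hpair]
        exact absurd hgij (not_lt.2 hgji)
      have cheb := hmono.sum_mul_sum_le_card_mul_sum
      -- identities
      have hA : ∑ x ∈ F, g x = (m+1 : ℝ) * esum u (m+1) F := esum_deriv u m F
      have hB : ∑ x ∈ F, u x * esum u (m+1) (F.erase x) = (m+2 : ℝ) * esum u (m+2) F := by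
        have := esum_deriv u (m+1) F
        push_cast at this ⊢
        linarith
      have hC : σ * esum u (m+1) F
          = (m+2 : ℝ) * esum u (m+2) F + ∑ x ∈ F, u x * g x := by
        have expand : ∀ x ∈ F, u x * esum u (m+1) F
            = u x * esum u (m+1) (F.erase x) + u x * g x := by
          intro x hx
          rw [esum_erase u m hx]
          simp only [hg]; ring
        calc σ * esum u (m+1) F = ∑ x ∈ F, u x * esum u (m+1) F := by
              rw [← Finset.sum_mul]
          _ = ∑ x ∈ F, (u x * esum u (m+1) (F.erase x) + u x * g x) :=
              Finset.sum_congr rfl expand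
          _ = (m+2 : ℝ) * esum u (m+2) F + ∑ x ∈ F, u x * g x := by
              rw [Finset.sum_add_distrib, hB]
      -- combine:  n * σ * E_{m+1} = n(m+2)E_{m+2} + n Σ u g ≥ n(m+2)E_{m+2} + σ(m+1)E_{m+1}
      have key : σ * ((m+1 : ℝ) * esum u (m+1) F) ≤ n * ∑ x ∈ F, u x * g x := by
        calc σ * ((m+1:ℝ) * esum u (m+1) F) = (∑ x ∈ F, u x) * ∑ x ∈ F, g x := by
              rw [hA]
          _ ≤ n * ∑ x ∈ F, u x * g x := by exact_mod_cast cheb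
      have hmul := congrArg (fun z => n * z) hC
      push_cast
      push_cast at hA hB hC key hmul
      nlinarith [key, hmul]

lemma esum_le {α : Type*} {u : α → ℝ} {F : Finset α} (hu : ∀ x ∈ F, 0 ≤ u x) :
    ∀ k : ℕ, (F.card : ℝ)^k * esum u k F ≤ (F.card.choose k : ℝ) * (∑ x ∈ F, u x)^k := by
  classical
  set n := F.card with hn
  set σ : ℝ := ∑ x ∈ F, u x with hσ
  have hσ0 : 0 ≤ σ := Finset.sum_nonneg hu
  intro k
  induction k with
  | zero => simp [esum_zero]
  | succ k ih =>
      by_cases hkn : n ≤ k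
      · have h0 : esum u (k+1) F = 0 := by
          rw [esum, Finset.powersetCard_eq_empty.2 (by omega), Finset.sum_empty]
        rw [h0, mul_zero]
        positivity
      · push_neg at hkn
        have hR := esum_ratio hu k
        have hEk : 0 ≤ esum u k F := esum_nonneg hu k
        -- n * (k+1) * E(k+1) ≤ (n - k) * σ * E k
        have hstep : (n : ℝ) * ((k+1 : ℝ) * esum u (k+1) F) ≤ ((n - k : ℕ) : ℝ) * (σ * esum u k F) := by
          have : ((n - k : ℕ) : ℝ) = (n : ℝ) - (k : ℝ) := by
            rw [Nat.cast_sub (le_of_lt hkn)]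
          rw [this]
          nlinarith [hR]
        -- multiply IH by (n-k)*σ ≥ 0
        have hmul : ((n-k : ℕ) : ℝ) * σ * ((n:ℝ)^k * esum u k F)
            ≤ ((n-k:ℕ) : ℝ) * σ * ((n.choose k : ℝ) * σ^k) := by
          apply mul_le_mul_of_nonneg_left ih
          positivity
        have hchoose : ((n.choose (k+1) : ℕ) : ℝ) * ((k+1 : ℕ) : ℝ)
            = ((n.choose k : ℕ) : ℝ) * ((n - k : ℕ) : ℝ) := by
          rw [← Nat.cast_mul, ← Nat.cast_mul, Nat.choose_succ_right_eq]
        have hnk : (0:ℝ) ≤ ((n-k:ℕ):ℝ) := by positivity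
        have hkpos : (0:ℝ) < (k:ℝ)+1 := by positivity
        -- goal : n^(k+1) * E(k+1) ≤ choose(n,k+1) * σ^(k+1)
        rw [pow_succ, pow_succ]
        have hnn : (0:ℝ) ≤ (n:ℝ)^k := by positivity
        have hE1 : 0 ≤ esum u (k+1) F := esum_nonneg hu (k+1)
        -- (k+1) * (n^(k+1) E(k+1)) ≤ n^k * (n-k) σ E k ≤ (n-k) σ choose σ^k = (k+1) choose(k+1) σ^(k+1)
        have c1 : ((k:ℝ)+1) * ((n:ℝ)^k * (n:ℝ) * esum u (k+1) F)
            ≤ (n:ℝ)^k * (((n-k:ℕ):ℝ) * (σ * esum u k F)) := by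
          have := mul_le_mul_of_nonneg_left hstep hnn
          nlinarith [this]
        have c2 : (n:ℝ)^k * (((n-k:ℕ):ℝ) * (σ * esum u k F))
            ≤ ((n-k:ℕ):ℝ) * σ * ((n.choose k : ℝ) * σ^k) := by
          calc (n:ℝ)^k * (((n-k:ℕ):ℝ) * (σ * esum u k F))
              = ((n-k:ℕ):ℝ) * σ * ((n:ℝ)^k * esum u k F) := by ring
            _ ≤ _ := hmul
        have c3 : ((n-k:ℕ):ℝ) * σ * ((n.choose k : ℝ) * σ^k)
            = ((k:ℝ)+1) * ((n.choose (k+1) : ℝ) * (σ^k * σ)) := by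
          have : ((n.choose k : ℕ) : ℝ) * ((n - k : ℕ) : ℝ)
              = ((n.choose (k+1) : ℕ) : ℝ) * ((k:ℝ)+1) := by
            rw [← hchoose]; push_cast; ring
          calc ((n-k:ℕ):ℝ) * σ * ((n.choose k : ℝ) * σ^k)
              = ((n.choose k : ℕ):ℝ) * ((n-k:ℕ):ℝ) * (σ^k * σ) := by ring
            _ = ((k:ℝ)+1) * ((n.choose (k+1) : ℝ) * (σ^k * σ)) := by rw [this]; ring
        have := le_trans c1 (le_trans c2 (le_of_eq c3))
        have := (mul_le_mul_iff_right₀ hkpos).1 this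
        linarith [this]

lemma hoeffding_pointwise {μ : ℝ} (h0 : 0 ≤ μ) (h1 : μ ≤ 1) {s : ℝ} (hs : 0 ≤ s) :
    1 - μ + μ * Real.exp s ≤ Real.exp (s * μ + s ^ 2 / 8) := by
  set D : ℝ → ℝ := fun t => 1 - μ + μ * Real.exp t with hDdef
  have hD : ∀ t, 0 < D t := by
    intro t
    have := Real.exp_pos t
    rcases eq_or_lt_of_le h0 with h | h
    · simp [hDdef, ← h]
    · have : 0 < μ * Real.exp t := by positivity
      simp only [hDdef]
      nlinarith
  have hDne : ∀ t, D t ≠ 0 := fun t => (hD t).ne'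
  set p : ℝ → ℝ := fun t => μ * Real.exp t / D t with hpdef
  set φ : ℝ → ℝ := fun t => p t - μ - t / 4 with hφdef
  set g : ℝ → ℝ := fun t => Real.log (D t) - t * μ - t ^ 2 / 8 with hgdef
  have hDderiv : ∀ t, HasDerivAt D (μ * Real.exp t) t := by
    intro t
    simpa [hDdef] using ((Real.hasDerivAt_exp t).const_mul μ).const_add (1 - μ)
  have hφderiv : ∀ t, HasDerivAt φ (p t - (p t)^2 - 1/4) t := by
    intro t
    have hq : HasDerivAt p (p t - (p t)^2) t := by
      have h1' : HasDerivAt (fun t => μ * Real.exp t) (μ * Real.exp t) t :=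
        (Real.hasDerivAt_exp t).const_mul μ
      have := h1'.div (hDderiv t) (hDne t)
      refine this.congr_deriv (Eq.symm ?_)
      have hne' : 1 - μ + μ * Real.exp t ≠ 0 := hDne t
      show μ * Real.exp t / (1 - μ + μ * Real.exp t)
          - (μ * Real.exp t / (1 - μ + μ * Real.exp t))^2
          = (μ * Real.exp t * (1 - μ + μ * Real.exp t)
            - μ * Real.exp t * (μ * Real.exp t)) / (1 - μ + μ * Real.exp t)^2
      field_simp
    have hlin : HasDerivAt (fun t : ℝ => μ + t / 4) (1/4) t := by
      simpa using ((hasDerivAt_id t).div_const 4).const_add μ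
    have := hq.sub hlin
    convert this using 1
    · rfl
    · rfl
    funext x
    simp only [hφdef, Pi.sub_apply]
    ring
  have hgderiv : ∀ t, HasDerivAt g (φ t) t := by
    intro t
    have hlog : HasDerivAt (fun t => Real.log (D t)) (μ * Real.exp t / D t) t :=
      (hDderiv t).log (hDne t)
    have hlin : HasDerivAt (fun t : ℝ => t * μ + t ^ 2 / 8) (μ + t / 4) t := by
      have h1' : HasDerivAt (fun t : ℝ => t * μ) μ t := by
        simpa using (hasDerivAt_id t).mul_const μ
      have h2' : HasDerivAt (fun t : ℝ => t ^ 2 / 8) (t / 4) t := by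
        have := (hasDerivAt_pow 2 t).div_const 8
        refine this.congr_deriv (Eq.symm ?_)
        ring
      exact h1'.add h2'
    have := hlog.sub hlin
    convert this using 1
    · rfl
    · rfl
    · funext t; simp only [hgdef, Pi.sub_apply]; ring
    · simp only [hφdef, hpdef]; ring
  -- φ is antitone
  have hφmono : Antitone φ := by
    apply antitone_of_deriv_nonpos (fun t => (hφderiv t).differentiableAt)
    intro t
    rw [(hφderiv t).deriv]
    nlinarith [sq_nonneg (p t - 1/2)]
  have hφ0 : φ 0 = 0 := by
    simp [hφdef, hpdef, hDdef]
  have hφnonpos : ∀ t, 0 ≤ t → φ t ≤ 0 := fun t ht => hφ0 ▸ hφmono ht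
  -- g is antitone on [0, ∞)
  have hgmono : AntitoneOn g (Set.Ici 0) := by
    apply antitoneOn_of_deriv_nonpos (convex_Ici 0)
      (fun t _ => (hgderiv t).continuousAt.continuousWithinAt)
      (fun t ht => (hgderiv t).differentiableAt.differentiableWithinAt)
    intro t ht
    rw [(hgderiv t).deriv]
    rw [interior_Ici] at ht
    exact hφnonpos t (le_of_lt ht)
  have hg0 : g 0 = 0 := by simp [hgdef, hDdef]
  have := hgmono (Set.self_mem_Ici) (Set.mem_Ici.2 hs) hs
  rw [hg0] at this
  have hlog : Real.log (D s) ≤ s * μ + s ^ 2 / 8 := by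
    simp only [hgdef] at this
    linarith
  exact (Real.log_le_iff_le_exp (hD s)).1 hlog

lemma chernoff_upper {α : Type*} [Fintype α] [Nonempty α] (v : α → ℝ)
    (hv : ∀ x, v x ∈ Set.Icc (0:ℝ) 1) {ε : ℝ} (hε : 0 < ε) (κ : ℕ) :
    ((((univ : Finset α).powersetCard κ).filter fun S =>
        (κ:ℝ) * ((∑ x, v x) / (Fintype.card α : ℝ) + ε) ≤ ∑ x ∈ S, v x).card : ℝ)
      ≤ ((Fintype.card α).choose κ : ℝ) * Real.exp (-(2 * κ * ε^2)) := by
  classical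
  set n := Fintype.card α with hn
  have hn0 : 0 < (n:ℝ) := by exact_mod_cast Fintype.card_pos
  set t : ℝ := 4 * ε with ht
  have ht0 : 0 ≤ t := by positivity
  set μ : ℝ := (∑ x, v x) / (n : ℝ) with hμdef
  have hμ0 : 0 ≤ μ := by
    apply div_nonneg _ (le_of_lt hn0)
    exact Finset.sum_nonneg fun x _ => (hv x).1
  have hμ1 : μ ≤ 1 := by
    rw [hμdef, div_le_one hn0]
    calc ∑ x, v x ≤ ∑ _x : α, (1:ℝ) := Finset.sum_le_sum fun x _ => (hv x).2
      _ = (n:ℝ) := by simp [hn]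
  set u : α → ℝ := fun x => Real.exp (t * v x) with hu
  set P := ((univ : Finset α).powersetCard κ) with hP
  set Bad := P.filter fun S => (κ:ℝ) * (μ + ε) ≤ ∑ x ∈ S, v x with hBad
  have step1 : (Bad.card : ℝ) ≤ ∑ S ∈ Bad, Real.exp (t * ((∑ x ∈ S, v x) - κ * (μ + ε))) := by
    rw [Finset.card_eq_sum_ones]
    push_cast
    apply Finset.sum_le_sum
    intro S hS
    have h2 := (Finset.mem_filter.1 hS).2
    have harg : 0 ≤ t * ((∑ x ∈ S, v x) - κ * (μ + ε)) := by nlinarith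
    nlinarith [Real.add_one_le_exp (t * ((∑ x ∈ S, v x) - κ * (μ + ε)))]
  have step2 : ∑ S ∈ Bad, Real.exp (t * ((∑ x ∈ S, v x) - κ * (μ + ε)))
      ≤ ∑ S ∈ P, Real.exp (t * ((∑ x ∈ S, v x) - κ * (μ + ε))) :=
    Finset.sum_le_sum_of_subset_of_nonneg (Finset.filter_subset _ _)
      (fun S _ _ => le_of_lt (Real.exp_pos _))
  have step3 : ∑ S ∈ P, Real.exp (t * ((∑ x ∈ S, v x) - κ * (μ + ε)))
      = Real.exp (-(t * (κ * (μ + ε)))) * esum u κ univ := by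
    rw [esum, Finset.mul_sum]
    refine Finset.sum_congr rfl fun S _ => ?_
    rw [mul_sub, Real.exp_sub, Real.exp_neg, div_eq_inv_mul]
    congr 1
    rw [Finset.mul_sum, Real.exp_sum]
  have hupos : ∀ x ∈ (univ : Finset α), 0 ≤ u x := fun x _ => le_of_lt (Real.exp_pos _)
  have hsum_u : ∑ x, u x ≤ (n:ℝ) * (1 - μ + μ * Real.exp t) := by
    have secant : ∀ x, u x ≤ 1 - v x + v x * Real.exp t := by
      intro x
      have h := convexOn_exp.2 (Set.mem_univ (0:ℝ)) (Set.mem_univ t)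
        (by linarith [(hv x).2] : (0:ℝ) ≤ 1 - v x) (hv x).1 (by ring)
      simp only [smul_eq_mul, mul_zero, Real.exp_zero, mul_one] at h
      calc u x = Real.exp ((1 - v x) * 0 + v x * t) := by
            simp only [hu]; ring_nf
        _ ≤ (1 - v x) * 1 + v x * Real.exp t := by simpa using h
        _ = 1 - v x + v x * Real.exp t := by ring
    calc ∑ x, u x ≤ ∑ x, (1 - v x + v x * Real.exp t) :=
          Finset.sum_le_sum fun x _ => secant x
      _ = (n:ℝ) - (∑ x, v x) + (∑ x, v x) * Real.exp t := by
          rw [Finset.sum_add_distrib, Finset.sum_sub_distrib, Finset.sum_const,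
            ← Finset.sum_mul]
          simp [hn]
      _ = (n:ℝ) * (1 - μ + μ * Real.exp t) := by
          have : (∑ x, v x) = (n:ℝ) * μ := by
            rw [hμdef]; field_simp
          rw [this]; ring
  have step4 : esum u κ univ ≤ (n.choose κ : ℝ) * (1 - μ + μ * Real.exp t)^κ := by
    have h1 := esum_le hupos κ
    rw [Finset.card_univ, ← hn] at h1
    have h2 : (∑ x ∈ univ, u x)^κ ≤ ((n:ℝ) * (1 - μ + μ * Real.exp t))^κ := by
      apply pow_le_pow_left₀ (Finset.sum_nonneg hupos) hsum_u
    have h3 : (n:ℝ)^κ * esum u κ univ ≤ (n.choose κ : ℝ) * ((n:ℝ)^κ * (1 - μ + μ * Real.exp t)^κ) := by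
      rw [← mul_pow]
      calc (n:ℝ)^κ * esum u κ univ ≤ (n.choose κ : ℝ) * (∑ x ∈ univ, u x)^κ := h1
        _ ≤ (n.choose κ : ℝ) * ((n:ℝ) * (1 - μ + μ * Real.exp t))^κ := by
            apply mul_le_mul_of_nonneg_left h2 (by positivity)
    have hnκ : (0:ℝ) < (n:ℝ)^κ := by positivity
    have := h3
    rw [show (n.choose κ : ℝ) * ((n:ℝ)^κ * (1 - μ + μ * Real.exp t)^κ)
        = (n:ℝ)^κ * ((n.choose κ : ℝ) * (1 - μ + μ * Real.exp t)^κ) by ring] at this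
    exact le_of_mul_le_mul_left this hnκ
  have step5 : (1 - μ + μ * Real.exp t)^κ ≤ Real.exp ((κ:ℝ) * (t * μ + t^2/8)) := by
    have hD0 : 0 ≤ 1 - μ + μ * Real.exp t := by nlinarith [Real.exp_pos t]
    calc (1 - μ + μ * Real.exp t)^κ ≤ (Real.exp (t * μ + t^2/8))^κ :=
          pow_le_pow_left₀ hD0 (hoeffding_pointwise hμ0 hμ1 ht0) κ
      _ = Real.exp ((κ:ℝ) * (t * μ + t^2/8)) := by
          rw [← Real.exp_nat_mul]
  calc (Bad.card : ℝ) ≤ Real.exp (-(t * (κ * (μ + ε)))) * esum u κ univ := by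
        rw [← step3]; exact le_trans step1 step2
    _ ≤ Real.exp (-(t * (κ * (μ + ε)))) * ((n.choose κ : ℝ) * Real.exp ((κ:ℝ) * (t * μ + t^2/8))) := by
        apply mul_le_mul_of_nonneg_left _ (le_of_lt (Real.exp_pos _))
        calc esum u κ univ ≤ (n.choose κ : ℝ) * (1 - μ + μ * Real.exp t)^κ := step4
          _ ≤ (n.choose κ : ℝ) * Real.exp ((κ:ℝ) * (t * μ + t^2/8)) := by
              apply mul_le_mul_of_nonneg_left step5 (by positivity)
    _ = (n.choose κ : ℝ) * Real.exp (-(t * (κ * (μ + ε))) + (κ:ℝ) * (t * μ + t^2/8)) := by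
        rw [Real.exp_add]; ring
    _ = (n.choose κ : ℝ) * Real.exp (-(2 * κ * ε^2)) := by
        congr 1
        rw [ht]
        ring_nf

end Aux

/-- **Correctness of the free-game approximation algorithm.**  With
`κ = ⌈ln(6|Y||B|)/ε²⌉ ≤ |X|`, with probability at least `2/3` over a uniformly
random `κ`-subset `S ⊆ X` there is a strategy `α` on `S` such that *every*
pointwise-optimal response `bα : Y → B` to `α` (with respect to the empirical
average over `S`) induces a best-response value within `[ω(G) − 2ε, ω(G)]`. -/
theorem freegame_algorithm_correctness (X Y A B : Type)
    [Fintype X] [Fintype Y] [Fintype A] [Fintype B]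
    [Nonempty X] [Nonempty Y] [Nonempty A] [Nonempty B]
    (V : X → Y → A → B → ℝ) (hV : ∀ x y a b, V x y a b ∈ Set.Icc (0 : ℝ) 1)
    (ε : ℝ) (hε : ε ∈ Set.Ioo (0 : ℝ) 1) (κ : ℕ)
    (hκ : κ = ⌈Real.log (6 * (Fintype.card Y : ℝ) * (Fintype.card B : ℝ)) / ε ^ 2⌉₊)
    (hκX : κ ≤ Fintype.card X) :
    (2 : ℝ) / 3 ≤
      ((((univ : Finset X).powersetCard κ).filter fun S =>
          ∃ α : X → A, ∀ bα : Y → B,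
            (∀ (y : Y) (b' : B),
                (∑ x ∈ S, V x y (α x) b') / (S.card : ℝ) ≤
                  (∑ x ∈ S, V x y (α x) (bα y)) / (S.card : ℝ)) →
            bestRespVal V bα ∈ Set.Icc (gameVal V - 2 * ε) (gameVal V)).card : ℝ) /
        (((univ : Finset X).powersetCard κ).card : ℝ) := by
  classical
  obtain ⟨hε0, hε1⟩ := hε
  set n := Fintype.card X with hn
  set NY := Fintype.card Y with hNY
  set NB := Fintype.card B with hNB
  have hn0 : 0 < (n:ℝ) := by exact_mod_cast Fintype.card_pos
  have hNY0 : 0 < (NY:ℝ) := by exact_mod_cast Fintype.card_pos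
  have hNB0 : 0 < (NB:ℝ) := by exact_mod_cast Fintype.card_pos
  have hNY1 : (1:ℝ) ≤ NY := by exact_mod_cast Fintype.card_pos
  have hNB1 : (1:ℝ) ≤ NB := by exact_mod_cast Fintype.card_pos
  -- the log quantity
  set L : ℝ := Real.log (6 * (NY:ℝ) * (NB:ℝ)) with hL
  have h6pos : (0:ℝ) < 6 * (NY:ℝ) * (NB:ℝ) := by positivity
  have hLpos : 0 < L := Real.log_pos (by nlinarith)
  have hκL : L ≤ (κ:ℝ) * ε^2 := by
    have h1 : L / ε^2 ≤ (κ:ℝ) := by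
      rw [hκ]
      exact Nat.le_ceil _
    have hε2 : (0:ℝ) < ε^2 := by positivity
    calc L = (L / ε^2) * ε^2 := by field_simp
      _ ≤ (κ:ℝ) * ε^2 := by nlinarith
  have hκ0 : 0 < κ := by
    rw [hκ]
    apply Nat.ceil_pos.2
    positivity
  have hκ0' : (0:ℝ) < (κ:ℝ) := by exact_mod_cast hκ0
  -- optimal strategies
  set f : (X → A) → (Y → B) → ℝ := fun a b =>
    (∑ x : X, ∑ y : Y, V x y (a x) (b y)) / ((n : ℝ) * (NY : ℝ)) with hf
  obtain ⟨⟨a0, b0⟩, hmax⟩ := Finite.exists_max (fun p : (X → A) × (Y → B) => f p.1 p.2)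
  have hgame : gameVal V = f a0 b0 := by
    apply le_antisymm
    · apply ciSup_le
      intro a
      apply ciSup_le
      intro b
      exact hmax (a, b)
    · calc f a0 b0 ≤ ⨆ b, f a0 b := le_ciSup (Finite.bddAbove_range _) b0
        _ ≤ gameVal V := le_ciSup (Finite.bddAbove_range fun a => ⨆ b, f a b) a0
  -- per-pair quantities
  set v : Y → B → X → ℝ := fun y b x => V x y (a0 x) b with hv'
  set T : Y → B → ℝ := fun y b => ∑ x : X, v y b x with hT
  set Good : Finset X → Prop := fun S =>
    ∀ y b, |(∑ x ∈ S, v y b x) - (κ:ℝ) * (T y b / (n:ℝ))| ≤ (κ:ℝ) * ε with hGood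
  set P := (univ : Finset X).powersetCard κ with hP
  have hPcard : (P.card : ℝ) = (n.choose κ : ℝ) := by
    rw [hP, Finset.card_powersetCard, Finset.card_univ]
  set C : ℝ := (n.choose κ : ℝ) with hC
  have hC0 : 0 < C := by
    rw [hC]
    exact_mod_cast Nat.choose_pos hκX
  -- counting bad sets
  set E : ℝ := Real.exp (-(2 * κ * ε^2)) with hE
  have hEbound : E ≤ ((6 * (NY:ℝ) * (NB:ℝ))^2)⁻¹ := by
    rw [hE]
    have : Real.exp (-(2 * κ * ε^2)) ≤ Real.exp (-(2 * L)) := by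
      apply Real.exp_le_exp.2
      nlinarith
    apply le_trans this
    rw [show -(2*L) = -(L + L) by ring, Real.exp_neg, Real.exp_add, hL, Real.exp_log h6pos]
    rw [sq]
  have hup : ∀ (y : Y) (b : B),
      (((P.filter fun S => (κ:ℝ) * (T y b / (n:ℝ) + ε) ≤ ∑ x ∈ S, v y b x).card : ℝ))
        ≤ C * E := by
    intro y b
    exact chernoff_upper (v y b) (fun x => hV x y (a0 x) b) hε0 κ
  have hlo : ∀ (y : Y) (b : B),
      (((P.filter fun S => ∑ x ∈ S, v y b x ≤ (κ:ℝ) * (T y b / (n:ℝ) - ε)).card : ℝ))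
        ≤ C * E := by
    intro y b
    have hmain := chernoff_upper (fun x => 1 - v y b x)
      (fun x => ⟨by simp only [hv']; linarith [(hV x y (a0 x) b).2],
                 by simp only [hv']; linarith [(hV x y (a0 x) b).1]⟩) hε0 κ
    have hsub : (P.filter fun S => ∑ x ∈ S, v y b x ≤ (κ:ℝ) * (T y b / (n:ℝ) - ε))
        ⊆ ((univ : Finset X).powersetCard κ).filter fun S =>
          (κ:ℝ) * ((∑ x, (1 - v y b x)) / (n : ℝ) + ε) ≤ ∑ x ∈ S, (1 - v y b x) := by
      intro S hS
      obtain ⟨hSP, hSle⟩ := Finset.mem_filter.1 hS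
      refine Finset.mem_filter.2 ⟨hSP, ?_⟩
      have hScard : (S.card : ℝ) = (κ:ℝ) := by
        exact_mod_cast (Finset.mem_powersetCard.1 hSP).2
      have e1 : ∑ x ∈ S, (1 - v y b x) = (κ:ℝ) - ∑ x ∈ S, v y b x := by
        rw [Finset.sum_sub_distrib, Finset.sum_const, nsmul_eq_mul, mul_one, hScard]
      have e2 : ∑ x : X, (1 - v y b x) = (n:ℝ) - T y b := by
        rw [Finset.sum_sub_distrib, Finset.sum_const, nsmul_eq_mul, mul_one, hT,
          Finset.card_univ, hn]
      rw [e1, e2]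
      have : ((n:ℝ) - T y b) / (n:ℝ) = 1 - T y b / (n:ℝ) := by field_simp
      rw [this]
      nlinarith
    calc (((P.filter fun S => ∑ x ∈ S, v y b x ≤ (κ:ℝ) * (T y b / (n:ℝ) - ε)).card : ℝ))
        ≤ _ := by exact_mod_cast Nat.cast_le.2 (Finset.card_le_card hsub)
      _ ≤ C * E := hmain
  set BadSet := P.filter (fun S => ¬ Good S) with hBadSet
  have hBadsub : BadSet ⊆ (univ : Finset (Y × B)).biUnion fun p =>
      (P.filter fun S => (κ:ℝ) * (T p.1 p.2 / (n:ℝ) + ε) ≤ ∑ x ∈ S, v p.1 p.2 x)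
      ∪ (P.filter fun S => ∑ x ∈ S, v p.1 p.2 x ≤ (κ:ℝ) * (T p.1 p.2 / (n:ℝ) - ε)) := by
    intro S hS
    obtain ⟨hSP, hSbad⟩ := Finset.mem_filter.1 hS
    simp only [hGood] at hSbad
    push_neg at hSbad
    obtain ⟨y, b, hyb⟩ := hSbad
    refine Finset.mem_biUnion.2 ⟨(y, b), Finset.mem_univ _, ?_⟩
    rcases lt_abs.1 hyb with h | h
    · exact Finset.mem_union_left _ (Finset.mem_filter.2 ⟨hSP, by nlinarith⟩)
    · exact Finset.mem_union_right _ (Finset.mem_filter.2 ⟨hSP, by nlinarith⟩)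
  have hBadcard : (BadSet.card : ℝ) ≤ (NY:ℝ) * (NB:ℝ) * (2 * C * E) := by
    calc (BadSet.card : ℝ) ≤ (((univ : Finset (Y × B)).biUnion fun p =>
          (P.filter fun S => (κ:ℝ) * (T p.1 p.2 / (n:ℝ) + ε) ≤ ∑ x ∈ S, v p.1 p.2 x)
          ∪ (P.filter fun S => ∑ x ∈ S, v p.1 p.2 x ≤ (κ:ℝ) * (T p.1 p.2 / (n:ℝ) - ε))).card : ℝ) := by
          exact_mod_cast Nat.cast_le.2 (Finset.card_le_card hBadsub)
      _ ≤ ∑ p : Y × B, ((((P.filter fun S => (κ:ℝ) * (T p.1 p.2 / (n:ℝ) + ε) ≤ ∑ x ∈ S, v p.1 p.2 x)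
          ∪ (P.filter fun S => ∑ x ∈ S, v p.1 p.2 x ≤ (κ:ℝ) * (T p.1 p.2 / (n:ℝ) - ε))).card : ℝ)) := by
          exact_mod_cast Nat.cast_le.2 Finset.card_biUnion_le
      _ ≤ ∑ _p : Y × B, 2 * C * E := by
          apply Finset.sum_le_sum
          rintro ⟨y, b⟩ _
          calc ((((P.filter fun S => (κ:ℝ) * (T y b / (n:ℝ) + ε) ≤ ∑ x ∈ S, v y b x)
              ∪ (P.filter fun S => ∑ x ∈ S, v y b x ≤ (κ:ℝ) * (T y b / (n:ℝ) - ε))).card : ℝ))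
              ≤ (((P.filter fun S => (κ:ℝ) * (T y b / (n:ℝ) + ε) ≤ ∑ x ∈ S, v y b x).card : ℝ))
                + (((P.filter fun S => ∑ x ∈ S, v y b x ≤ (κ:ℝ) * (T y b / (n:ℝ) - ε)).card : ℝ)) := by
                exact_mod_cast Nat.cast_le.2 (Finset.card_union_le _ _)
            _ ≤ 2 * C * E := by
                have := hup y b
                have := hlo y b
                linarith
      _ = (NY:ℝ) * (NB:ℝ) * (2 * C * E) := by
          rw [Finset.sum_const, Finset.card_univ, nsmul_eq_mul, Fintype.card_prod]
          push_cast
          ring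
  have hBadthird : (BadSet.card : ℝ) ≤ C / 3 := by
    have h1 : (NY:ℝ) * (NB:ℝ) * (2 * C * E) ≤ (NY:ℝ)*(NB:ℝ)*2*C*((6 * (NY:ℝ) * (NB:ℝ))^2)⁻¹ := by
      have hCE : 0 ≤ (NY:ℝ)*(NB:ℝ)*2*C := by positivity
      calc (NY:ℝ) * (NB:ℝ) * (2 * C * E) = ((NY:ℝ)*(NB:ℝ)*2*C)*E := by ring
        _ ≤ ((NY:ℝ)*(NB:ℝ)*2*C)*((6 * (NY:ℝ) * (NB:ℝ))^2)⁻¹ :=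
            mul_le_mul_of_nonneg_left hEbound hCE
    have h2 : (NY:ℝ)*(NB:ℝ)*2*C*((6 * (NY:ℝ) * (NB:ℝ))^2)⁻¹ ≤ C / 3 := by
      rw [div_eq_mul_inv]
      have key : (NY:ℝ)*(NB:ℝ)*2*((6 * (NY:ℝ) * (NB:ℝ))^2)⁻¹ ≤ 3⁻¹ := by
        rw [mul_inv_le_iff₀ (by positivity)]
        have : (1:ℝ) ≤ (NY:ℝ)*(NB:ℝ) := by nlinarith
        nlinarith
      calc (NY:ℝ)*(NB:ℝ)*2*C*((6 * (NY:ℝ) * (NB:ℝ))^2)⁻¹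
          = C * ((NY:ℝ)*(NB:ℝ)*2*((6 * (NY:ℝ) * (NB:ℝ))^2)⁻¹) := by ring
        _ ≤ C * 3⁻¹ := mul_le_mul_of_nonneg_left key (le_of_lt hC0)
    linarith [hBadcard]
  -- good sets satisfy the property
  have hGoodImp : ∀ S ∈ P, Good S →
      (∃ α : X → A, ∀ bα : Y → B,
        (∀ (y : Y) (b' : B),
            (∑ x ∈ S, V x y (α x) b') / (S.card : ℝ) ≤
              (∑ x ∈ S, V x y (α x) (bα y)) / (S.card : ℝ)) →
        bestRespVal V bα ∈ Set.Icc (gameVal V - 2 * ε) (gameVal V)) := by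
    intro S hSP hGoodS
    refine ⟨a0, fun bα hbα => ?_⟩
    have hScard : (S.card : ℝ) = (κ:ℝ) := by
      exact_mod_cast (Finset.mem_powersetCard.1 hSP).2
    have hbα' : ∀ (y : Y) (b' : B), ∑ x ∈ S, v y b' x ≤ ∑ x ∈ S, v y (bα y) x := by
      intro y b'
      have := hbα y b'
      rw [hScard] at this
      exact (div_le_div_iff_of_pos_right hκ0').1 this
    -- pointwise over y
    have hy : ∀ y : Y, T y (b0 y) ≤ T y (bα y) + 2 * ε * (n:ℝ) := by
      intro y
      have g1 := hGoodS y (bα y)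
      have g2 := hGoodS y (b0 y)
      rw [abs_le] at g1 g2
      have hb := hbα' y (b0 y)
      have hdiv : T y (b0 y) / (n:ℝ) ≤ T y (bα y) / (n:ℝ) + 2 * ε := by
        have e1 : (κ:ℝ) * (T y (b0 y) / (n:ℝ)) - (κ:ℝ)*ε ≤ ∑ x ∈ S, v y (b0 y) x := by
          linarith [g2.1]
        have e2 : ∑ x ∈ S, v y (bα y) x ≤ (κ:ℝ) * (T y (bα y) / (n:ℝ)) + (κ:ℝ)*ε := by
          linarith [g1.2]
        have : (κ:ℝ) * (T y (b0 y) / (n:ℝ)) ≤ (κ:ℝ) * (T y (bα y) / (n:ℝ)) + 2*(κ:ℝ)*ε := by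
          linarith
        nlinarith
      have := mul_le_mul_of_nonneg_left hdiv (le_of_lt hn0)
      calc T y (b0 y) = (n:ℝ) * (T y (b0 y) / (n:ℝ)) := by field_simp
        _ ≤ (n:ℝ) * (T y (bα y) / (n:ℝ) + 2*ε) := this
        _ = (n:ℝ) * (T y (bα y) / (n:ℝ)) + 2*ε*(n:ℝ) := by ring
        _ = T y (bα y) + 2*ε*(n:ℝ) := by
            congr 1
            field_simp
    have hsumy : ∑ y : Y, T y (b0 y) ≤ (∑ y : Y, T y (bα y)) + 2 * ε * (n:ℝ) * (NY:ℝ) := by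
      calc ∑ y : Y, T y (b0 y) ≤ ∑ y : Y, (T y (bα y) + 2 * ε * (n:ℝ)) :=
            Finset.sum_le_sum fun y _ => hy y
        _ = (∑ y : Y, T y (bα y)) + 2 * ε * (n:ℝ) * (NY:ℝ) := by
            rw [Finset.sum_add_distrib, Finset.sum_const, Finset.card_univ, nsmul_eq_mul]
            push_cast [hNY]
            ring
    have hval : ∀ b : Y → B, f a0 b = (∑ y : Y, T y (b y)) / ((n : ℝ) * (NY : ℝ)) := by
      intro b
      rw [hf]
      congr 1
      rw [Finset.sum_comm]
    have hlow : gameVal V - 2 * ε ≤ f a0 bα := by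
      rw [hgame, hval b0, hval bα]
      have hD : (0:ℝ) < (n:ℝ) * (NY:ℝ) := by positivity
      have h1 : (∑ y : Y, T y (b0 y)) / ((n:ℝ)*(NY:ℝ))
          ≤ ((∑ y : Y, T y (bα y)) + 2*ε*((n:ℝ)*(NY:ℝ))) / ((n:ℝ)*(NY:ℝ)) := by
        apply (div_le_div_iff_of_pos_right hD).2
        nlinarith [hsumy]
      have h2 : ((∑ y : Y, T y (bα y)) + 2*ε*((n:ℝ)*(NY:ℝ))) / ((n:ℝ)*(NY:ℝ))
          = (∑ y : Y, T y (bα y)) / ((n:ℝ)*(NY:ℝ)) + 2*ε := by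
        field_simp
      linarith [h1, h2.le, h2.ge]
    have hbest_low : f a0 bα ≤ bestRespVal V bα := by
      unfold bestRespVal
      exact le_ciSup (Finite.bddAbove_range fun a => (∑ x : X, ∑ y : Y, V x y (a x) (bα y)) /
        ((Fintype.card X : ℝ) * (Fintype.card Y : ℝ))) a0
    have hbest_up : bestRespVal V bα ≤ gameVal V := by
      apply ciSup_le
      intro a
      calc (∑ x : X, ∑ y : Y, V x y (a x) (bα y)) / ((n : ℝ) * (NY : ℝ))
          = f a bα := rfl
        _ ≤ ⨆ b, f a b := le_ciSup (Finite.bddAbove_range _) bα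
        _ ≤ gameVal V := le_ciSup (Finite.bddAbove_range fun a => ⨆ b, f a b) a
    exact ⟨le_trans hlow hbest_low, hbest_up⟩
  -- finish
  set Target := P.filter fun S =>
      ∃ α : X → A, ∀ bα : Y → B,
        (∀ (y : Y) (b' : B),
            (∑ x ∈ S, V x y (α x) b') / (S.card : ℝ) ≤
              (∑ x ∈ S, V x y (α x) (bα y)) / (S.card : ℝ)) →
        bestRespVal V bα ∈ Set.Icc (gameVal V - 2 * ε) (gameVal V) with hTarget
  have hGsub : P.filter Good ⊆ Target := by
    intro S hS
    obtain ⟨hSP, hSGood⟩ := Finset.mem_filter.1 hS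
    exact Finset.mem_filter.2 ⟨hSP, hGoodImp S hSP hSGood⟩
  have hsplit : ((P.filter Good).card : ℝ) + (BadSet.card : ℝ) = (P.card : ℝ) := by
    have hnat : (P.filter Good).card + (P.filter (fun S => ¬ Good S)).card = P.card :=
      Finset.card_filter_add_card_filter_not (p := Good)
    rw [hBadSet]
    exact_mod_cast hnat
  have hGoodcard : (2:ℝ)/3 * C ≤ ((P.filter Good).card : ℝ) := by
    rw [← hPcard] at hBadthird ⊢
    have := hsplit
    rw [hPcard] at this hBadthird
    rw [hPcard]
    linarith
  have hTargetcard : (2:ℝ)/3 * C ≤ (Target.card : ℝ) := by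
    calc (2:ℝ)/3 * C ≤ ((P.filter Good).card : ℝ) := hGoodcard
      _ ≤ (Target.card : ℝ) := by exact_mod_cast Nat.cast_le.2 (Finset.card_le_card hGsub)
  rw [le_div_iff₀ (by rw [hPcard]; exact hC0)]
  calc (2:ℝ)/3 * (P.card : ℝ) = (2:ℝ)/3 * C := by rw [hPcard]
    _ ≤ (Target.card : ℝ) := hTargetcard
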